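/- Let T be the star-shaped labelled graph with one central vertex and v ≥ 2 arms, where arm i (1 ≤ i ≤ v) is a chain of n_i ≥ 1 vertices attached at one end to the center; the center carries the label −β with β ≥ 1, and the j-th vertex of arm i carries the label −α_{ij} with α_{ij} ≥ 2. Let Z denote the free abelian group on the vertex set, with symmetric bilinear pairing Y·W determined by E_k·E_k = (label of E_k) and, for k ≠ l, E_k·E_l = 1 if E_k and E_l are adjacent in T and 0 otherwise. Let Z_top := {W = ∑ a_k E_k : W ≠ 0, all a_k ≥ 0, and W·E_k ≤ 0 for every vertex E_k}. Then the cycle Z := ∑_k E_k (all coefficients equal to 1) is the least element of Z_top with respect to the componentwise order (in particular Z ∈ Z_top) if and only if β ≥ v. -/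

import Mathlib

noncomputable section

/-- Vertices of the star-shaped graph: `none` is the central vertex, and
`some ⟨i, j⟩` is the `j`-th vertex of arm `i`. -/
abbrev StarVertex (v : ℕ) (narm : Fin v → ℕ) : Type :=
  Option ((i : Fin v) × Fin (narm i))

/-- Adjacency of the star-shaped tree: the center is adjacent to the first vertex of
each arm, and consecutive vertices of an arm are adjacent. -/
def starAdj {v : ℕ} {narm : Fin v → ℕ} :
    StarVertex v narm → StarVertex v narm → Prop
  | none, none => False
  | none, some ⟨_, j⟩ => (j : ℕ) = 0
  | some ⟨_, j⟩, none => (j : ℕ) = 0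
  | some ⟨i, j⟩, some ⟨i', j'⟩ =>
      i = i' ∧ ((j : ℕ) + 1 = (j' : ℕ) ∨ (j' : ℕ) + 1 = (j : ℕ))

/-- The label (self-intersection number) of each vertex: `−β` at the center and
`−α i j` on the arms. -/
def starLabel {v : ℕ} {narm : Fin v → ℕ} (β : ℕ) (α : (i : Fin v) → Fin (narm i) → ℕ) :
    StarVertex v narm → ℤ
  | none => -(β : ℤ)
  | some ⟨i, j⟩ => -(α i j : ℤ)

open Classical in
/-- The intersection matrix `M_T` of the labelled star-shaped tree. -/
def starMat {v : ℕ} {narm : Fin v → ℕ} (β : ℕ) (α : (i : Fin v) → Fin (narm i) → ℕ)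
    (x y : StarVertex v narm) : ℤ :=
  if x = y then starLabel β α x else if starAdj x y then 1 else 0

/-- The symmetric bilinear pairing `Y · W` on cycles determined by `M_T`. -/
def starDot {v : ℕ} {narm : Fin v → ℕ} (β : ℕ) (α : (i : Fin v) → Fin (narm i) → ℕ)
    (Y W : StarVertex v narm → ℤ) : ℤ :=
  ∑ x : StarVertex v narm, ∑ y : StarVertex v narm, Y x * W y * starMat β α x y

/-- `Z_top`: the nonzero effective cycles `W` with `W · E_k ≤ 0` for every vertex. -/
def starZtop {v : ℕ} {narm : Fin v → ℕ} (β : ℕ)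
    (α : (i : Fin v) → Fin (narm i) → ℕ) : Set (StarVertex v narm → ℤ) :=
  { W | W ≠ 0 ∧ (∀ x, 0 ≤ W x) ∧
      ∀ x : StarVertex v narm, starDot β α W (Pi.single x 1) ≤ 0 }

section Aux

open Finset

variable {v : ℕ} {narm : Fin v → ℕ}

open Classical in
/-- The sum of the coefficients of `W` over the neighbours of `x`. -/
def nbhdSum (W : StarVertex v narm → ℤ) (x : StarVertex v narm) : ℤ :=
  ∑ a : StarVertex v narm, if a = x then 0 else if starAdj a x then W a else 0

lemma dot_single (β : ℕ) (α : (i : Fin v) → Fin (narm i) → ℕ)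
    (W : StarVertex v narm → ℤ) (x : StarVertex v narm) :
    starDot β α W (Pi.single x 1) = W x * starLabel β α x + nbhdSum W x := by
  classical
  unfold starDot nbhdSum
  have h1 : ∀ a : StarVertex v narm,
      (∑ y, W a * (Pi.single x 1 : StarVertex v narm → ℤ) y * starMat β α a y) = W a * starMat β α a x := by
    intro a
    rw [Finset.sum_eq_single x]
    · simp
    · intro b _ hb; simp [Pi.single_apply, hb]
    · simp
  simp only [h1]
  calc (∑ a : StarVertex v narm, W a * starMat β α a x)
      = ∑ a : StarVertex v narm, ((if a = x then W x * starLabel β α x else 0) +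
          (if a = x then 0 else if starAdj a x then W a else 0)) := by
        refine Finset.sum_congr rfl fun a _ => ?_
        by_cases h : a = x
        · subst h; simp [starMat]
        · simp [starMat, h, mul_ite]
    _ = _ := by
        rw [Finset.sum_add_distrib, Finset.sum_ite_eq' Finset.univ x
          (fun _ => W x * starLabel β α x)]
        simp

lemma le_nbhdSum (W : StarVertex v narm → ℤ) (hW : ∀ x, 0 ≤ W x)
    {a x : StarVertex v narm} (hax : a ≠ x) (hadj : starAdj a x) :
    W a ≤ nbhdSum W x := by
  classical
  have key := Finset.single_le_sum
    (f := fun b : StarVertex v narm => if b = x then 0 else if starAdj b x then W b else 0)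
    (fun b _ => by split_ifs <;> simp [hW b]) (Finset.mem_univ a)
  have hWa : W a = if a = x then (0:ℤ) else if starAdj a x then W a else 0 := by
    rw [if_neg hax, if_pos hadj]
  unfold nbhdSum
  rw [hWa]
  exact key

lemma zero_prop {β : ℕ} {α : (i : Fin v) → Fin (narm i) → ℕ}
    {W : StarVertex v narm → ℤ} (hW : W ∈ starZtop β α) {x a : StarVertex v narm}
    (hx : W x = 0) (hax : a ≠ x) (hadj : starAdj a x) : W a = 0 := by
  obtain ⟨-, hpos, hdot⟩ := hW
  have h := hdot x
  rw [dot_single, hx, zero_mul, zero_add] at h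
  exact le_antisymm ((le_nbhdSum W hpos hax hadj).trans h) (hpos a)

lemma mem_one_le {β : ℕ} {α : (i : Fin v) → Fin (narm i) → ℕ}
    {W : StarVertex v narm → ℤ} (hW : W ∈ starZtop β α) (x : StarVertex v narm) :
    1 ≤ W x := by
  have hpos := hW.2.1
  by_contra hlt
  have hx0 : W x = 0 := le_antisymm (by omega) (hpos x)
  -- propagate zero down to the center
  have hdown : ∀ (i : Fin v) (n : ℕ) (j : Fin (narm i)), (j : ℕ) = n →
      W (some ⟨i, j⟩) = 0 → W none = 0 := by
    intro i n
    induction n with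
    | zero =>
      intro j hj h0
      exact zero_prop hW h0 (by simp) (by simp [starAdj, hj])
    | succ m ih =>
      intro j hj h0
      have hm : m < narm i := by have := j.isLt; omega
      have hprev : W (some ⟨i, ⟨m, hm⟩⟩) = 0 := by
        refine zero_prop hW h0 ?_ ?_
        · intro h
          have h2 : (⟨m, hm⟩ : Fin (narm i)) = j := by simpa using h
          have : ((⟨m, hm⟩ : Fin (narm i)) : ℕ) = (j : ℕ) := by rw [h2]
          simp at this; omega
        · refine ⟨rfl, Or.inl ?_⟩
          simp [hj]
      exact ih ⟨m, hm⟩ rfl hprev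
  have hnone : W none = 0 := by
    match x with
    | none => exact hx0
    | some ⟨i, j⟩ => exact hdown i (j : ℕ) j rfl hx0
  -- propagate zero up the arms
  have hup : ∀ (i : Fin v) (n : ℕ) (j : Fin (narm i)), (j : ℕ) = n →
      W (some ⟨i, j⟩) = 0 := by
    intro i n
    induction n with
    | zero =>
      intro j hj
      exact zero_prop hW hnone (by simp) (by simp [starAdj, hj])
    | succ m ih =>
      intro j hj
      have hm : m < narm i := by have := j.isLt; omega
      have hprev : W (some ⟨i, ⟨m, hm⟩⟩) = 0 := ih ⟨m, hm⟩ rfl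
      refine zero_prop hW hprev ?_ ?_
      · intro h
        have h2 : j = (⟨m, hm⟩ : Fin (narm i)) := by simpa using h
        have : (j : ℕ) = ((⟨m, hm⟩ : Fin (narm i)) : ℕ) := by rw [h2]
        simp at this; omega
      · refine ⟨rfl, Or.inr ?_⟩
        simp [hj]
  apply hW.1
  funext a
  match a with
  | none => exact hnone
  | some ⟨i, j⟩ => exact hup i (j : ℕ) j rfl

lemma indic_sum_le_one {n : ℕ} (p : Fin n → Prop) [DecidablePred p]
    (hp : ∀ a b, p a → p b → a = b) :
    (∑ j : Fin n, if p j then (1 : ℤ) else 0) ≤ 1 := by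
  rw [Finset.sum_boole]
  exact_mod_cast Finset.card_le_one.mpr fun a ha b hb =>
    hp a b (Finset.mem_filter.mp ha).2 (Finset.mem_filter.mp hb).2

lemma nbhdSum_one_none (hnarm : ∀ i, 1 ≤ narm i) :
    nbhdSum (narm := narm) (fun _ => (1 : ℤ)) none = v := by
  classical
  unfold nbhdSum
  rw [Fintype.sum_option]
  rw [show (Finset.univ : Finset ((i : Fin v) × Fin (narm i)))
      = Finset.univ.sigma (fun _ => Finset.univ) from (Finset.univ_sigma_univ).symm,
    Finset.sum_sigma]
  have h1 : ∀ i : Fin v, (∑ j : Fin (narm i),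
      (if (some ⟨i, j⟩ : StarVertex v narm) = none then (0:ℤ)
        else if starAdj (some ⟨i, j⟩) none then 1 else 0)) = 1 := by
    intro i
    rw [Finset.sum_eq_single (⟨0, hnarm i⟩ : Fin (narm i))]
    · simp [starAdj]
    · intro b _ hb
      have hb' : (b : ℕ) ≠ 0 := fun h => hb (Fin.ext h)
      simp [starAdj, hb']
    · simp
  simp only [h1]
  simp

lemma ite_le_ite_add_ite {p q r : Prop} [Decidable p] [Decidable q] [Decidable r]
    (h : p → q ∨ r) :
    (if p then (1:ℤ) else 0) ≤ (if q then (1:ℤ) else 0) + (if r then (1:ℤ) else 0) := by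
  have h2 : ∀ (s : Prop) [Decidable s], (0:ℤ) ≤ if s then 1 else 0 := by
    intro s _; split_ifs <;> norm_num
  by_cases hp : p
  · rw [if_pos hp]
    rcases h hp with hq | hr
    · rw [if_pos hq]; linarith [h2 r]
    · rw [if_pos hr]; linarith [h2 q]
  · rw [if_neg hp]; linarith [h2 q, h2 r]

lemma nbhd_one_arm_le (i : Fin v) (j : Fin (narm i)) :
    nbhdSum (narm := narm) (fun _ => (1 : ℤ)) (some ⟨i, j⟩) ≤ 2 := by
  classical
  unfold nbhdSum
  rw [Fintype.sum_option]
  rw [show (Finset.univ : Finset ((i : Fin v) × Fin (narm i)))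
      = Finset.univ.sigma (fun _ => Finset.univ) from (Finset.univ_sigma_univ).symm,
    Finset.sum_sigma]
  have h0 : (if (none : StarVertex v narm) = some ⟨i, j⟩ then (0:ℤ)
      else if starAdj none (some ⟨i, j⟩) then 1 else 0)
      = if (j : ℕ) = 0 then 1 else 0 := by
    simp [starAdj]
    split_ifs <;> simp_all [starAdj]
  have hterm : ∀ (i' : Fin v) (j' : Fin (narm i')),
      (if (some ⟨i', j'⟩ : StarVertex v narm) = some ⟨i, j⟩ then (0:ℤ)
        else if starAdj (some ⟨i', j'⟩) (some ⟨i, j⟩) then 1 else 0)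
      ≤ (if i' = i ∧ (j' : ℕ) + 1 = (j : ℕ) then (1:ℤ) else 0) +
        (if i' = i ∧ (j : ℕ) + 1 = (j' : ℕ) then (1:ℤ) else 0) := by
    intro i' j'
    have step1 : (if (some ⟨i', j'⟩ : StarVertex v narm) = some ⟨i, j⟩ then (0:ℤ)
        else if starAdj (some ⟨i', j'⟩) (some ⟨i, j⟩) then 1 else 0)
        ≤ if starAdj (some ⟨i', j'⟩) (some ⟨i, j⟩) then (1:ℤ) else 0 := by
      split_ifs <;> norm_num
    refine step1.trans (ite_le_ite_add_ite ?_)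
    intro hadj
    obtain ⟨h1, h2⟩ := hadj
    rcases h2 with h2 | h2
    · exact Or.inl ⟨h1, h2⟩
    · exact Or.inr ⟨h1, h2⟩
  have hsum : (∑ i' : Fin v, ∑ j' : Fin (narm i'),
      (if (some ⟨i', j'⟩ : StarVertex v narm) = some ⟨i, j⟩ then (0:ℤ)
        else if starAdj (some ⟨i', j'⟩) (some ⟨i, j⟩) then 1 else 0))
      ≤ (∑ i' : Fin v, ∑ j' : Fin (narm i'),
          (if i' = i ∧ (j' : ℕ) + 1 = (j : ℕ) then (1:ℤ) else 0)) +
        (∑ i' : Fin v, ∑ j' : Fin (narm i'),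
          (if i' = i ∧ (j : ℕ) + 1 = (j' : ℕ) then (1:ℤ) else 0)) := by
    rw [← Finset.sum_add_distrib]
    refine Finset.sum_le_sum fun i' _ => ?_
    rw [← Finset.sum_add_distrib]
    exact Finset.sum_le_sum fun j' _ => hterm i' j'
  have hS1 : (∑ i' : Fin v, ∑ j' : Fin (narm i'),
      (if i' = i ∧ (j' : ℕ) + 1 = (j : ℕ) then (1:ℤ) else 0))
      ≤ if (j : ℕ) = 0 then 0 else 1 := by
    rw [Fintype.sum_eq_single i (fun i' hne =>
      Finset.sum_eq_zero fun j' _ => if_neg fun h => hne h.1)]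
    by_cases hj : (j : ℕ) = 0
    · rw [if_pos hj]
      refine le_of_eq (Finset.sum_eq_zero fun j' _ => if_neg ?_)
      rintro ⟨-, h⟩; omega
    · rw [if_neg hj]
      have := indic_sum_le_one (n := narm i)
        (fun j' => i = i ∧ (j' : ℕ) + 1 = (j : ℕ))
        (fun a b ha hb => Fin.ext (by omega))
      exact this
  have hS2 : (∑ i' : Fin v, ∑ j' : Fin (narm i'),
      (if i' = i ∧ (j : ℕ) + 1 = (j' : ℕ) then (1:ℤ) else 0)) ≤ 1 := by
    rw [Fintype.sum_eq_single i (fun i' hne =>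
      Finset.sum_eq_zero fun j' _ => if_neg fun h => hne h.1)]
    exact indic_sum_le_one (n := narm i)
      (fun j' => i = i ∧ (j : ℕ) + 1 = (j' : ℕ))
      (fun a b ha hb => Fin.ext (by omega))
  rw [h0]
  by_cases hj : (j : ℕ) = 0
  · rw [if_pos hj]
    rw [if_pos hj] at hS1
    linarith
  · rw [if_neg hj]
    rw [if_neg hj] at hS1
    linarith

end Aux

/-- For the star-shaped labelled tree with `v ≥ 2` arms, labels
`−β` (center, `β ≥ 1`) and `−α_{ij} ≤ −2` (arms), the reduced cycle `Z = ∑ E_k` is the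
least element of `Z_top` for the componentwise order (in particular `Z ∈ Z_top`)
if and only if `β ≥ v`. -/
theorem reduced_fundamental_cycle_iff (v : ℕ) (hv : 2 ≤ v) (narm : Fin v → ℕ)
    (hnarm : ∀ i, 1 ≤ narm i) (β : ℕ) (hβ : 1 ≤ β)
    (α : (i : Fin v) → Fin (narm i) → ℕ) (hα : ∀ i j, 2 ≤ α i j) :
    ((fun _ : StarVertex v narm => (1 : ℤ)) ∈ starZtop β α ∧
      ∀ W ∈ starZtop β α, ∀ x : StarVertex v narm, (1 : ℤ) ≤ W x) ↔ v ≤ β := by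
  constructor
  · rintro ⟨⟨-, -, hdot⟩, -⟩
    have h := hdot none
    rw [dot_single, nbhdSum_one_none hnarm] at h
    simp only [starLabel, one_mul] at h
    have : (v : ℤ) ≤ (β : ℤ) := by linarith
    exact_mod_cast this
  · intro hvβ
    refine ⟨⟨?_, fun _ => zero_le_one, ?_⟩, fun W hW x => mem_one_le hW x⟩
    · intro h
      have := congrFun h none
      simp at this
    · intro x
      rw [dot_single]
      match x with
      | none =>
        rw [nbhdSum_one_none hnarm]
        simp only [starLabel, one_mul]
        have : (v : ℤ) ≤ (β : ℤ) := by exact_mod_cast hvβ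
        linarith
      | some ⟨i, j⟩ =>
        have h2 := nbhd_one_arm_le i j
        have h3 : (2 : ℤ) ≤ (α i j : ℤ) := by exact_mod_cast hα i j
        simp only [starLabel, one_mul]
        linarith
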